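/- Let α ∈ Σ^k, ℓ ≥ 1, ℓ ≥ r, and u ∈ Σ^ℓ. Define L_α(u,ℓ,r) = P_α(uα,ℓ)* · u · (H_α*(L_α,ℓ−1,r) ∩ α·Σ*·ᾱ·ū) · (P_α(uα,r))‾*. Then L_α(u,ℓ,r) ⊆ H_α*(L_α,ℓ,r). -/

import Mathlib

open Computability

/-- Reverse-complement of a word under the involution `bar`. -/
def wbar {S : Type} (bar : S → S) (w : List S) : List S := (w.map bar).reverse

/-- The set of `α`-prefixes of `w` of length at most `ℓ`. -/
def Pa {S : Type} (α w : List S) (ℓ : ℕ) : Language S :=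
  {v | v ++ α <+: w ∧ v.length ≤ ℓ}

/-- `α Σ* ᾱ` : words with prefix `α` and suffix `ᾱ`. -/
def Dom {S : Type} (bar : S → S) (α : List S) : Language S :=
  {z | ∃ β, z = α ++ β ++ wbar bar α}

/-- One-step parameterized hairpin completion with binding word `α`,
left bound `ℓ`, right bound `r`. -/
def HaP {S : Type} (bar : S → S) (α : List S) (ℓ r : ℕ) (L : Language S) : Language S :=
  {z | ∃ γ β, γ.length ≤ ℓ ∧ z = γ ++ α ++ β ++ wbar bar α ++ wbar bar γ ∧
      α ++ β ++ wbar bar α ++ wbar bar γ ∈ L} ⊔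
  {z | ∃ γ β, γ.length ≤ r ∧ z = γ ++ α ++ β ++ wbar bar α ++ wbar bar γ ∧
      γ ++ α ++ β ++ wbar bar α ∈ L}

/-- One-step parameterized hairpin completion `H_k(L,ℓ,r)`. -/
def HkP {S : Type} (bar : S → S) (k ℓ r : ℕ) (L : Language S) : Language S :=
  {z | ∃ α : List S, α.length = k ∧ z ∈ HaP bar α ℓ r L}

def HaIter {S : Type} (bar : S → S) (α : List S) (ℓ r : ℕ) (L : Language S) : ℕ → Language S
  | 0 => L
  | n + 1 => HaP bar α ℓ r (HaIter bar α ℓ r L n)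

/-- Iterated parameterized hairpin completion `H_α*(L,ℓ,r)`. -/
def HaStar {S : Type} (bar : S → S) (α : List S) (ℓ r : ℕ) (L : Language S) : Language S :=
  {z | ∃ n, z ∈ HaIter bar α ℓ r L n}

def HkIter {S : Type} (bar : S → S) (k ℓ r : ℕ) (L : Language S) : ℕ → Language S
  | 0 => L
  | n + 1 => HkP bar k ℓ r (HkIter bar k ℓ r L n)

/-- Iterated parameterized hairpin completion `H_k*(L,ℓ,r)`. -/
def HkStar {S : Type} (bar : S → S) (k ℓ r : ℕ) (L : Language S) : Language S :=
  {z | ∃ n, z ∈ HkIter bar k ℓ r L n}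

/-- Unbounded two-sided hairpin completion `H_k(L)`. -/
def HU {S : Type} (bar : S → S) (k : ℕ) (L : Language S) : Language S :=
  {z | ∃ γ α β, α.length = k ∧ z = γ ++ α ++ β ++ wbar bar α ++ wbar bar γ ∧
      (α ++ β ++ wbar bar α ++ wbar bar γ ∈ L ∨ γ ++ α ++ β ++ wbar bar α ∈ L)}

/-- Unbounded right-sided hairpin completion `RH_k(L)`. -/
def RHU {S : Type} (bar : S → S) (k : ℕ) (L : Language S) : Language S :=
  {z | ∃ γ α β, α.length = k ∧ z = γ ++ α ++ β ++ wbar bar α ++ wbar bar γ ∧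
      γ ++ α ++ β ++ wbar bar α ∈ L}

def HUIter {S : Type} (bar : S → S) (k : ℕ) (L : Language S) : ℕ → Language S
  | 0 => L
  | n + 1 => HU bar k (HUIter bar k L n)

/-- Iterated unbounded two-sided hairpin completion `H_k*(L)`. -/
def HUStar {S : Type} (bar : S → S) (k : ℕ) (L : Language S) : Language S :=
  {z | ∃ n, z ∈ HUIter bar k L n}

def RHUIter {S : Type} (bar : S → S) (k : ℕ) (L : Language S) : ℕ → Language S
  | 0 => L
  | n + 1 => RHU bar k (RHUIter bar k L n)

/-- Iterated unbounded right-sided hairpin completion `RH_k*(L)`. -/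
def RHUStar {S : Type} (bar : S → S) (k : ℕ) (L : Language S) : Language S :=
  {z | ∃ n, z ∈ RHUIter bar k L n}

/-- Image of a language under reverse-complement. -/
def barSet {S : Type} (bar : S → S) (A : Language S) : Language S := wbar bar '' A

/- ===================== auxiliary material ===================== -/

namespace HairpinAux

variable {S : Type}

lemma wbar_append (bar : S → S) (x y : List S) :
    wbar bar (x ++ y) = wbar bar y ++ wbar bar x := by
  simp [wbar]

lemma wbar_length (bar : S → S) (x : List S) : (wbar bar x).length = x.length := by
  simp [wbar]

lemma wbar_wbar (bar : S → S) (hbar : ∀ a, bar (bar a) = a) (x : List S) :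
    wbar bar (wbar bar x) = x := by
  simp [wbar, List.map_reverse, List.map_map, Function.comp_def, hbar]

lemma wbar_suffix_of_prefix (bar : S → S) {x y : List S} (h : x <+: y) :
    wbar bar x <:+ wbar bar y := by
  obtain ⟨t, rfl⟩ := h
  rw [wbar_append]
  exact List.suffix_append _ _

lemma prefix_of_wbar_suffix (bar : S → S) (hbar : ∀ a, bar (bar a) = a) {x y : List S}
    (h : wbar bar x <:+ wbar bar y) : x <+: y := by
  obtain ⟨t, ht⟩ := h
  refine ⟨wbar bar t, ?_⟩
  have h2 := congrArg (wbar bar) ht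
  rwa [wbar_append, wbar_wbar bar hbar, wbar_wbar bar hbar] at h2

lemma exists_middle {x y C : List S} (hx : x <+: C) (hy : y <:+ C)
    (hlen : x.length + y.length ≤ C.length) : ∃ β, C = x ++ β ++ y := by
  obtain ⟨e, rfl⟩ := hy
  have hxe : x <+: e := by
    refine List.prefix_of_prefix_length_le hx (List.prefix_append e y) ?_
    simp only [List.length_append] at hlen
    omega
  obtain ⟨β, rfl⟩ := hxe
  exact ⟨β, by simp⟩

lemma getLastD_mem : ∀ (l : List (List S)) (d : List S),
    l.getLastD d ∈ l ∨ l.getLastD d = d := by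
  intro l
  induction l with
  | nil => intro d; exact Or.inr rfl
  | cons x rest ih =>
    intro d
    rw [List.getLastD_cons]
    rcases ih x with h | h
    · exact Or.inl (List.mem_cons_of_mem _ h)
    · exact Or.inl (by rw [h]; exact List.mem_cons_self)

lemma max_split : ∀ (b : List (List S)), b ≠ [] →
    ∃ b0 m b1, b = b0 ++ m :: b1 ∧ ∀ x ∈ b, x.length ≤ m.length := by
  intro b
  induction b with
  | nil => intro h; exact absurd rfl h
  | cons c rest ih =>
    intro _
    rcases eq_or_ne rest [] with rfl | hne
    · exact ⟨[], c, [], rfl, by simp⟩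
    · obtain ⟨b0, m, b1, heq, hmax⟩ := ih hne
      by_cases hc : c.length ≤ m.length
      · refine ⟨c :: b0, m, b1, by rw [heq]; rfl, ?_⟩
        intro x hx
        rcases List.mem_cons.mp hx with rfl | hx
        · exact hc
        · exact hmax x hx
      · refine ⟨[], c, rest, rfl, ?_⟩
        intro x hx
        rcases List.mem_cons.mp hx with rfl | hx
        · exact le_rfl
        · exact (hmax x hx).trans (le_of_not_ge hc)

lemma a_split (M : ℕ) : ∀ (a : List (List S)),
    ∃ a0 a1, a = a0 ++ a1 ∧ (∀ x ∈ a1, x.length ≤ M) ∧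
      (a0 = [] ∨ ∀ d : List S, M ≤ (a0.getLastD d).length) := by
  intro a
  induction a with
  | nil => exact ⟨[], [], rfl, by simp, Or.inl rfl⟩
  | cons x rest ih =>
    obtain ⟨a0, a1, heq, h1, h2⟩ := ih
    rcases h2 with h0 | h0
    · subst h0
      simp only [List.nil_append] at heq
      subst heq
      by_cases hx : x.length ≤ M
      · refine ⟨[], x :: rest, rfl, ?_, Or.inl rfl⟩
        intro y hy
        rcases List.mem_cons.mp hy with rfl | hy
        · exact hx
        · exact h1 y hy
      · refine ⟨[x], rest, rfl, h1, Or.inr ?_⟩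
        intro d
        rw [List.getLastD_cons, List.getLastD_nil]
        exact le_of_not_ge hx
    · refine ⟨x :: a0, a1, by rw [heq]; rfl, h1, Or.inr ?_⟩
      intro d
      rw [List.getLastD_cons]
      exact h0 x

lemma extract_bars (bar : S → S) (P : Language S) :
    ∀ (ys : List (List S)), (∀ y ∈ ys, y ∈ barSet bar P) →
      ∃ qs : List (List S), ys = qs.map (wbar bar) ∧ ∀ q ∈ qs, q ∈ P := by
  intro ys
  induction ys with
  | nil => intro _; exact ⟨[], rfl, by simp⟩
  | cons y rest ih =>
    intro h
    obtain ⟨q, hq, hqy⟩ := h y (List.mem_cons_self)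
    obtain ⟨qs, hqs, hqsP⟩ := ih (fun y hy => h y (List.mem_cons_of_mem _ hy))
    refine ⟨q :: qs, ?_, ?_⟩
    · rw [List.map_cons, ← hqs, hqy]
    · intro q' hq'
      rcases List.mem_cons.mp hq' with rfl | hq'
      · exact hq
      · exact hqsP q' hq'

lemma haIter_mono (bar : S → S) (α : List S) {ℓ1 ℓ2 r : ℕ} (Lα : Language S)
    (hl : ℓ1 ≤ ℓ2) : ∀ n, HaIter bar α ℓ1 r Lα n ≤ HaIter bar α ℓ2 r Lα n := by
  intro n
  induction n with
  | zero => exact le_rfl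
  | succ n ih =>
    intro z hz
    rcases hz with ⟨γ, β, hγ, hzeq, hmem⟩ | ⟨γ, β, hγ, hzeq, hmem⟩
    · exact Or.inl ⟨γ, β, hγ.trans hl, hzeq, ih hmem⟩
    · exact Or.inr ⟨γ, β, hγ, hzeq, ih hmem⟩

/-- The invariant carried along the derivation. -/
def Inv (bar : S → S) (α u : List S) (ℓ r : ℕ) (Lα : Language S)
    (C s t : List S) : Prop :=
  C ∈ HaStar bar α ℓ r Lα ∧ (s ++ α <+: C) ∧ (wbar bar (t ++ α) <:+ C) ∧
  (s ++ α <+: u ++ α) ∧ (t ++ α <+: u ++ α) ∧ (2 * α.length + ℓ ≤ C.length)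

variable (bar : S → S) (α u : List S) (ℓ r : ℕ) (Lα : Language S)

lemma stepL (hu : u.length = ℓ) (hα : α <+: u ++ α) {C s t p : List S}
    (hI : Inv bar α u ℓ r Lα C s t)
    (hpu : p ++ α <+: u ++ α) (hpl : p.length ≤ ℓ) (hpt : p.length ≤ t.length) :
    Inv bar α u ℓ r Lα (p ++ C) p t := by
  obtain ⟨⟨n, hC⟩, hpre, hsuf, hsu, htu, hlen⟩ := hI
  have hαs : α <+: s ++ α := List.prefix_of_prefix_length_le hα hsu (by simp)
  have hαC : α <+: C := hαs.trans hpre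
  have hpt' : p ++ α <+: t ++ α :=
    List.prefix_of_prefix_length_le hpu htu (by simp [hpt])
  have hsufp : wbar bar (p ++ α) <:+ C := (wbar_suffix_of_prefix bar hpt').trans hsuf
  rw [wbar_append] at hsufp
  have hlen2 : α.length + (wbar bar α ++ wbar bar p).length ≤ C.length := by
    have h1 := wbar_length bar α
    have h2 := wbar_length bar p
    simp only [List.length_append, h1, h2]
    omega
  obtain ⟨β, hCeq⟩ := exists_middle hαC hsufp hlen2
  have hCeq' : p ++ α ++ β ++ wbar bar α ++ wbar bar p = p ++ C := by
    simp [hCeq, List.append_assoc]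
  have hCmem : α ++ β ++ wbar bar α ++ wbar bar p ∈ HaIter bar α ℓ r Lα n := by
    have : α ++ β ++ wbar bar α ++ wbar bar p = C := by
      simp [hCeq, List.append_assoc]
    rw [this]; exact hC
  refine ⟨⟨n + 1, Or.inl ⟨p, β, hpl, hCeq'.symm, hCmem⟩⟩, ?_, ?_, hpu, htu, ?_⟩
  · obtain ⟨w, hw⟩ := hαC
    exact ⟨w, by rw [← hw]; simp [List.append_assoc]⟩
  · exact hsuf.trans (List.suffix_append p C)
  · simp only [List.length_append]; omega

lemma stepR (hu : u.length = ℓ) (hr : r ≤ ℓ) (hα : α <+: u ++ α) {C s t q : List S}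
    (hI : Inv bar α u ℓ r Lα C s t)
    (hqu : q ++ α <+: u ++ α) (hql : q.length ≤ r) (hqs : q.length ≤ s.length) :
    Inv bar α u ℓ r Lα (C ++ wbar bar q) s q := by
  obtain ⟨⟨n, hC⟩, hpre, hsuf, hsu, htu, hlen⟩ := hI
  have hqs' : q ++ α <+: s ++ α :=
    List.prefix_of_prefix_length_le hqu hsu (by simp [hqs])
  have hqC : q ++ α <+: C := hqs'.trans hpre
  have hαt : α <+: t ++ α := List.prefix_of_prefix_length_le hα htu (by simp)
  have hαsuf : wbar bar α <:+ C := (wbar_suffix_of_prefix bar hαt).trans hsuf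
  have hlen2 : (q ++ α).length + (wbar bar α).length ≤ C.length := by
    have h1 := wbar_length bar α
    simp only [List.length_append, h1]
    omega
  obtain ⟨β, hCeq⟩ := exists_middle hqC hαsuf hlen2
  have hCeq' : q ++ α ++ β ++ wbar bar α ++ wbar bar q = C ++ wbar bar q := by
    simp [hCeq, List.append_assoc]
  have hCmem : q ++ α ++ β ++ wbar bar α ∈ HaIter bar α ℓ r Lα n := by
    have : q ++ α ++ β ++ wbar bar α = C := by simp [hCeq, List.append_assoc]
    rw [this]; exact hC
  refine ⟨⟨n + 1, Or.inr ⟨q, β, hql, hCeq'.symm, hCmem⟩⟩, ?_, ?_, hsu, hqu, ?_⟩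
  · exact hpre.trans (List.prefix_append C _)
  · obtain ⟨e, he⟩ := hαsuf
    refine ⟨e, ?_⟩
    rw [wbar_append]
    rw [← he]; simp [List.append_assoc]
  · simp only [List.length_append]; omega

lemma prependAll (hu : u.length = ℓ) (hα : α <+: u ++ α) :
    ∀ (a0 : List (List S)) (C s : List S) {t : List S},
      (∀ x ∈ a0, x ++ α <+: u ++ α ∧ x.length ≤ ℓ ∧ x.length ≤ t.length) →
      Inv bar α u ℓ r Lα C s t →
      Inv bar α u ℓ r Lα (a0.reverse.flatten ++ C) (a0.getLastD s) t := by
  intro a0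
  induction a0 with
  | nil => intro C s t _ hI; simpa using hI
  | cons x rest ih =>
    intro C s t hcond hI
    have hx := hcond x (List.mem_cons_self)
    have h1 : Inv bar α u ℓ r Lα (x ++ C) x t :=
      stepL bar α u ℓ r Lα hu hα hI hx.1 hx.2.1 hx.2.2
    have h2 := ih (x ++ C) x (fun y hy => hcond y (List.mem_cons_of_mem _ hy)) h1
    have hw : (x :: rest).reverse.flatten ++ C = rest.reverse.flatten ++ (x ++ C) := by
      simp [List.append_assoc]
    rw [List.getLastD_cons, hw]
    exact h2

lemma appendAll (hu : u.length = ℓ) (hr : r ≤ ℓ) (hα : α <+: u ++ α) :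
    ∀ (b0 : List (List S)) (C t : List S) {s : List S},
      (∀ x ∈ b0, x ++ α <+: u ++ α ∧ x.length ≤ r ∧ x.length ≤ s.length) →
      Inv bar α u ℓ r Lα C s t →
      Inv bar α u ℓ r Lα (C ++ (b0.map (wbar bar)).flatten) s (b0.getLastD t) := by
  intro b0
  induction b0 with
  | nil => intro C t s _ hI; simpa using hI
  | cons x rest ih =>
    intro C t s hcond hI
    have hx := hcond x (List.mem_cons_self)
    have h1 : Inv bar α u ℓ r Lα (C ++ wbar bar x) s x :=
      stepR bar α u ℓ r Lα hu hr hα hI hx.1 hx.2.1 hx.2.2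
    have h2 := ih (C ++ wbar bar x) x (fun y hy => hcond y (List.mem_cons_of_mem _ hy)) h1
    have hw : C ++ ((x :: rest).map (wbar bar)).flatten
        = (C ++ wbar bar x) ++ (rest.map (wbar bar)).flatten := by
      simp [List.append_assoc]
    rw [List.getLastD_cons, hw]
    exact h2

lemma mainLemma (hu : u.length = ℓ) (hr : r ≤ ℓ) (hα : α <+: u ++ α) :
    ∀ (N : ℕ) (b : List (List S)), b.length ≤ N →
    ∀ (a : List (List S)) (C s t : List S),
      (∀ x ∈ a, x ++ α <+: u ++ α ∧ x.length ≤ ℓ ∧ x.length ≤ t.length) →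
      (∀ x ∈ b, x ++ α <+: u ++ α ∧ x.length ≤ r ∧ x.length ≤ s.length) →
      Inv bar α u ℓ r Lα C s t →
      a.reverse.flatten ++ C ++ (b.map (wbar bar)).flatten ∈ HaStar bar α ℓ r Lα := by
  intro N
  induction N with
  | zero =>
    intro b hb a C s t ha hbc hI
    have hbnil : b = [] := List.length_eq_zero_iff.mp (Nat.le_zero.mp hb)
    subst hbnil
    simpa using (prependAll bar α u ℓ r Lα hu hα a C s ha hI).1
  | succ N ih =>
    intro b hb a C s t ha hbc hI
    rcases eq_or_ne b [] with rfl | hbne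
    · simpa using (prependAll bar α u ℓ r Lα hu hα a C s ha hI).1
    · obtain ⟨b0, m, b1, rfl, hmax⟩ := max_split b hbne
      obtain ⟨a0, a1, rfl, ha1, ha0⟩ := a_split m.length a
      have hI1 := prependAll bar α u ℓ r Lα hu hα a0 C s
        (fun x hx => ha x (by simp [hx])) hI
      set s1 := a0.getLastD s with hs1def
      have hs1u : s1 ++ α <+: u ++ α := by
        rcases getLastD_mem a0 s with h | h
        · exact (ha s1 (List.mem_append.mpr (Or.inl h))).1
        · rw [hs1def, h]; exact hI.2.2.2.1
      have hs1l : s1.length ≤ ℓ := by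
        have := hs1u.length_le
        simp only [List.length_append] at this
        omega
      have hs1len : m.length ≤ s1.length := by
        rcases ha0 with h0 | h0
        · have h2 := (hbc m (by simp)).2.2
          rw [hs1def, h0, List.getLastD_nil]
          exact h2
        · exact h0 s
      have hblock : ∀ x ∈ b0 ++ [m],
          x ++ α <+: u ++ α ∧ x.length ≤ r ∧ x.length ≤ s1.length := by
        intro x hx
        have hxb : x ∈ b0 ++ m :: b1 := by
          rcases List.mem_append.mp hx with h | h
          · exact List.mem_append.mpr (Or.inl h)
          · simp at h
            exact List.mem_append.mpr (Or.inr (h ▸ List.mem_cons_self))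
        exact ⟨(hbc x hxb).1, (hbc x hxb).2.1, (hmax x hxb).trans hs1len⟩
      have hI2 := appendAll bar α u ℓ r Lα hu hr hα (b0 ++ [m]) _ t hblock hI1
      rw [List.getLastD_concat] at hI2
      have hrec := ih b1
        (by
          have := hb
          simp only [List.length_append, List.length_cons] at this
          omega)
        a1 _ s1 m
        (fun x hx => ⟨(ha x (by simp [hx])).1, (ha x (by simp [hx])).2.1, ha1 x hx⟩)
        (fun x hx =>
          ⟨(hbc x (by simp [hx])).1, (hbc x (by simp [hx])).2.1,
            (hmax x (by simp [hx])).trans hs1len⟩)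
        hI2
      have hword : (a0 ++ a1).reverse.flatten ++ C ++ ((b0 ++ m :: b1).map (wbar bar)).flatten
          = a1.reverse.flatten ++
            ((a0.reverse.flatten ++ C) ++ ((b0 ++ [m]).map (wbar bar)).flatten) ++
            (b1.map (wbar bar)).flatten := by
        simp [List.append_assoc]
      rw [hword]
      exact hrec

lemma alpha_prefix {ℓ' : ℕ} (hbar : ∀ a, bar (bar a) = a) (hu : u.length = ℓ)
    (hr : r ≤ ℓ) (hℓ' : ℓ' ≤ ℓ) (hL : Lα ≤ Dom bar α) {h : List S} {n : ℕ}
    (hh : h ∈ HaIter bar α ℓ' r Lα n)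
    (hform : ∃ δ, h = α ++ δ ++ wbar bar α ++ wbar bar u) : α <+: u ++ α := by
  obtain ⟨δ, hδ⟩ := hform
  have hdecomp : ∃ γ β, γ.length ≤ ℓ ∧ h = γ ++ α ++ β ++ wbar bar α ++ wbar bar γ := by
    cases n with
    | zero =>
      obtain ⟨β, hβ⟩ := hL hh
      exact ⟨[], β, by simp, by simpa [wbar] using hβ⟩
    | succ n =>
      rcases hh with ⟨γ, β, hγ, hzeq, _⟩ | ⟨γ, β, hγ, hzeq, _⟩
      · exact ⟨γ, β, hγ.trans hℓ', hzeq⟩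
      · exact ⟨γ, β, hγ.trans hr, hzeq⟩
  obtain ⟨γ, β, hγl, hγeq⟩ := hdecomp
  have hγα : γ ++ α <+: h :=
    ⟨β ++ wbar bar α ++ wbar bar γ, by simp [hγeq, List.append_assoc]⟩
  have hαh : α <+: h :=
    ⟨δ ++ wbar bar α ++ wbar bar u, by simp [hδ, List.append_assoc]⟩
  have hαγα : α <+: γ ++ α := List.prefix_of_prefix_length_le hαh hγα (by simp)
  have h1 : wbar bar (γ ++ α) <:+ h := by
    rw [wbar_append]
    exact ⟨γ ++ α ++ β, by simp [hγeq, List.append_assoc]⟩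
  have h2 : wbar bar (u ++ α) <:+ h := by
    rw [wbar_append]
    exact ⟨α ++ δ, by simp [hδ, List.append_assoc]⟩
  have h3 : wbar bar (γ ++ α) <:+ wbar bar (u ++ α) := by
    refine List.suffix_of_suffix_length_le h1 h2 ?_
    have e1 := wbar_length bar (γ ++ α)
    have e2 := wbar_length bar (u ++ α)
    rw [e1, e2]
    simp only [List.length_append]
    omega
  exact hαγα.trans (prefix_of_wbar_suffix bar hbar h3)

end HairpinAux

/-- `L_α(u,ℓ,r) = P_α(uα,ℓ)* · u · (H_α*(L_α,ℓ−1,r) ∩ α·Σ*·ᾱ·ū) · (P_α(uα,r))‾*`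
is contained in `H_α*(L_α,ℓ,r)`. -/
theorem Lcal_subset_HaStar {S : Type} (bar : S → S)
    (hbar : ∀ a, bar (bar a) = a) (k ℓ r : ℕ) (hℓ : 1 ≤ ℓ) (hr : r ≤ ℓ)
    (α u : List S) (hα : α.length = k) (hu : u.length = ℓ)
    (Lα : Language S) (hL : Lα ≤ Dom bar α) :
    (Pa α (u ++ α) ℓ)∗ * (({u} : Language S) *
        ((HaStar bar α (ℓ - 1) r Lα ⊓
            {z | ∃ β, z = α ++ β ++ wbar bar α ++ wbar bar u}) *
          (barSet bar (Pa α (u ++ α) r))∗))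
      ≤ HaStar bar α ℓ r Lα := by
  open HairpinAux in
  intro z hz
  replace hz := Language.mem_mul.mp hz
  obtain ⟨x, hx, z1, hz1, hzeq⟩ := hz
  replace hz1 := Language.mem_mul.mp hz1
  obtain ⟨u', hu', z2, hz2, hz1eq⟩ := hz1
  replace hu' : u = u' := Eq.symm hu'
  subst hu'
  replace hz2 := Language.mem_mul.mp hz2
  obtain ⟨h, hh, y, hy, hz2eq⟩ := hz2
  obtain ⟨hhH, δ, hδ⟩ := hh
  obtain ⟨n, hn⟩ := hhH
  rw [Language.mem_kstar] at hx hy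
  obtain ⟨ps, hxps, hps⟩ := hx
  obtain ⟨ys, hyys, hys⟩ := hy
  obtain ⟨qs, hqs, hqsP⟩ := extract_bars bar _ ys hys
  -- α is a prefix of u ++ α
  have hαu : α <+: u ++ α :=
    alpha_prefix bar α u ℓ r Lα hbar hu hr (Nat.sub_le ℓ 1) hL hn ⟨δ, hδ⟩
  -- the seed word u ++ h
  have hn' : h ∈ HaIter bar α ℓ r Lα n :=
    haIter_mono bar α Lα (Nat.sub_le ℓ 1) n hn
  have hseed : u ++ h ∈ HaStar bar α ℓ r Lα := by
    refine ⟨n + 1, Or.inl ⟨u, δ, le_of_eq hu, ?_, ?_⟩⟩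
    · simp [hδ, List.append_assoc]
    · rw [← hδ]; exact hn'
  have hInv : HairpinAux.Inv bar α u ℓ r Lα (u ++ h) u u := by
    refine ⟨hseed, ?_, ?_, List.prefix_rfl, List.prefix_rfl, ?_⟩
    · exact ⟨δ ++ wbar bar α ++ wbar bar u, by simp [hδ, List.append_assoc]⟩
    · rw [wbar_append]
      exact ⟨u ++ (α ++ δ), by simp [hδ, List.append_assoc]⟩
    · have e1 := wbar_length bar α
      have e2 := wbar_length bar u
      have : h.length = α.length + δ.length + α.length + u.length := by
        rw [hδ]; simp only [List.length_append, e1, e2]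
      simp only [List.length_append, this, hu]
      omega
  have hmain := mainLemma bar α u ℓ r Lα hu hr hαu qs.length qs le_rfl
    ps.reverse (u ++ h) u u
    (fun p hp => by
      have hp' : p ∈ ps := List.mem_reverse.mp hp
      obtain ⟨h1, h2⟩ := hps p hp'
      exact ⟨h1, h2, by rw [hu]; exact h2⟩)
    (fun q hq => by
      obtain ⟨h1, h2⟩ := hqsP q hq
      exact ⟨h1, h2, by rw [hu]; exact h2.trans hr⟩)
    hInv
  have hzword : z = ps.reverse.reverse.flatten ++ (u ++ h) ++ (qs.map (wbar bar)).flatten := by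
    rw [← hzeq, ← hz1eq, ← hz2eq, hxps, hyys, hqs]
    simp [List.append_assoc]
  rw [hzword]
  exact hmain
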